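/- The double series ∑_{l=0}^∞ ∑_{k=0}^∞ c(l,k) converges and its sum equals 1. -/

import Mathlib

open scoped Classical

/-- The constants `c(l,k)`: `c(l,0) = c(0,k) = 0`,
`c(1,k) = (2k²+14k)/((k+1)(k+2)(k+3)(k+4))` for `k ≥ 1`, and for `l > 1`, `k > 0`,
`c(l,k) = c(l,k-1)·(l+k-1)/(2l+k+2) + c(l-1,k)·(l-1)/(2l+k+2)`. -/
noncomputable def c : ℕ → ℕ → ℝ
  | _, 0 => 0
  | 0, _ => 0
  | 1, k + 1 =>
      (2 * ((k : ℝ) + 1) ^ 2 + 14 * ((k : ℝ) + 1)) /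
        (((k : ℝ) + 2) * ((k : ℝ) + 3) * ((k : ℝ) + 4) * ((k : ℝ) + 5))
  | l + 2, k + 1 =>
      c (l + 2) k * ((l : ℝ) + (k : ℝ) + 2) / (2 * (l : ℝ) + (k : ℝ) + 7) +
      c (l + 1) (k + 1) * ((l : ℝ) + 1) / (2 * (l : ℝ) + (k : ℝ) + 7)
termination_by l k => (l, k)


lemma c_z1 (l : ℕ) : c l 0 = 0 := by cases l <;> simp [c]
lemma c_z2 (k : ℕ) : c 0 k = 0 := by cases k <;> simp [c]
lemma c_one (k : ℕ) : c 1 (k+1) = (2 * ((k : ℝ) + 1) ^ 2 + 14 * ((k : ℝ) + 1)) /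
        (((k : ℝ) + 2) * ((k : ℝ) + 3) * ((k : ℝ) + 4) * ((k : ℝ) + 5)) := by simp [c]
lemma c_rec (l k : ℕ) : c (l+2) (k+1) =
      c (l + 2) k * ((l : ℝ) + (k : ℝ) + 2) / (2 * (l : ℝ) + (k : ℝ) + 7) +
      c (l + 1) (k + 1) * ((l : ℝ) + 1) / (2 * (l : ℝ) + (k : ℝ) + 7) := by rw [c]

lemma c_nonneg : ∀ l k, 0 ≤ c l k := by
  intro l
  induction l with
  | zero => intro k; rw [c_z2]
  | succ l ih =>
    match l with
    | 0 =>
      intro k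
      cases k with
      | zero => rw [c_z1]
      | succ k => rw [c_one]; positivity
    | m + 1 =>
      intro k
      induction k with
      | zero => rw [c_z1]
      | succ k ihk =>
        rw [c_rec]
        have h1 := ih (k+1)
        have h2 : (0:ℝ) ≤ (m:ℝ) + (k:ℝ) + 2 := by positivity
        have h3 : (0:ℝ) ≤ (m:ℝ) + 1 := by positivity
        have h4 : (0:ℝ) ≤ 2*(m:ℝ) + (k:ℝ) + 7 := by positivity
        exact add_nonneg (div_nonneg (mul_nonneg ihk h2) h4)
          (div_nonneg (mul_nonneg h1 h3) h4)

lemma key (m : ℕ) : ∀ n : ℕ,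
    ((m:ℝ)+4) * (∑ k ∈ Finset.range (n+1), c (m+2) k) + ((m:ℝ)+2+(n:ℝ)) * c (m+2) n
      = ((m:ℝ)+1) * ∑ k ∈ Finset.range (n+1), c (m+1) k := by
  intro n
  induction n with
  | zero => simp [c_z1]
  | succ n ih =>
    rw [Finset.sum_range_succ, Finset.sum_range_succ ((c (m+1)) ·)]
    rw [c_rec]
    have h7 : (2*(m:ℝ)+(n:ℝ)+7) ≠ 0 := by positivity
    set a := c (m+2) n
    set b := c (m+1) (n+1)
    have hx : (2*(m:ℝ)+(n:ℝ)+7) *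
        (a * ((m:ℝ) + (n:ℝ) + 2) / (2 * (m:ℝ) + (n:ℝ) + 7) +
         b * ((m:ℝ) + 1) / (2 * (m:ℝ) + (n:ℝ) + 7))
        = a*((m:ℝ)+(n:ℝ)+2) + b*((m:ℝ)+1) := by
      field_simp
    push_cast
    linear_combination ih + hx

lemma row1_partial (n : ℕ) : ∑ k ∈ Finset.range (n+1), c 1 k
    = 2/3 + 2/((n:ℝ)+2) - 8/((n:ℝ)+3) + 4/((n:ℝ)+4) := by
  induction n with
  | zero => simp [c_z1]; norm_num
  | succ n ih =>
    rw [Finset.sum_range_succ, ih, c_one]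
    have h2 : ((n:ℝ)+2) ≠ 0 := by positivity
    have h3 : ((n:ℝ)+3) ≠ 0 := by positivity
    have h4 : ((n:ℝ)+4) ≠ 0 := by positivity
    have h5 : ((n:ℝ)+5) ≠ 0 := by positivity
    push_cast
    field_simp
    ring

lemma tendsto_aux (a b : ℝ) :
    Filter.Tendsto (fun n : ℕ => a/((n:ℝ)+b)) Filter.atTop (nhds 0) :=
  Filter.Tendsto.div_atTop tendsto_const_nhds
    (Filter.tendsto_atTop_add_const_right _ b tendsto_natCast_atTop_atTop)

lemma hasSum_row1 : HasSum (fun k => c 1 k) (2/3) := by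
  rw [hasSum_iff_tendsto_nat_of_nonneg (c_nonneg 1)]
  rw [← Filter.tendsto_add_atTop_iff_nat 1]
  have : Filter.Tendsto (fun n : ℕ => 2/3 + 2/((n:ℝ)+2) - 8/((n:ℝ)+3) + 4/((n:ℝ)+4))
      Filter.atTop (nhds (2/3 + 0 - 0 + 0)) :=
    ((tendsto_const_nhds.add (tendsto_aux 2 2)).sub (tendsto_aux 8 3)).add (tendsto_aux 4 4)
  simp only [row1_partial]
  simpa using this

lemma rowSum : ∀ l : ℕ, HasSum (fun k => c (l+1) k)
    (4/(((l:ℝ)+1)*((l:ℝ)+2)*((l:ℝ)+3))) := by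
  intro l
  induction l with
  | zero =>
    have h : (4:ℝ)/((((0:ℕ):ℝ))+1)/((((0:ℕ):ℝ))+2)/((((0:ℕ):ℝ))+3) = 2/3 := by norm_num
    convert hasSum_row1 using 1
    norm_num
  | succ m ih =>
    set S : ℝ := 4/(((m:ℝ)+1)*((m:ℝ)+2)*((m:ℝ)+3)) with hSdef
    have hSpos : 0 < S := by positivity
    have hUle : ∀ n : ℕ, ∑ k ∈ Finset.range n, c (m+1) k ≤ S := fun n =>
      sum_le_hasSum _ (fun i _ => c_nonneg _ i) ih
    have hbound : ∀ n : ℕ, ∑ k ∈ Finset.range n, c (m+2) k ≤ ((m:ℝ)+1)*S/((m:ℝ)+4) := by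
      intro n
      cases n with
      | zero => simp; positivity
      | succ n =>
        have hk := key m n
        have h1 := hUle (n+1)
        have h2 : 0 ≤ ((m:ℝ)+2+(n:ℝ)) * c (m+2) n :=
          mul_nonneg (by positivity) (c_nonneg _ _)
        rw [le_div_iff₀ (by positivity : (0:ℝ) < (m:ℝ)+4)]
        nlinarith [mul_le_mul_of_nonneg_left h1 (by positivity : (0:ℝ) ≤ (m:ℝ)+1)]
    have hsummable : Summable (fun k => c (m+2) k) :=
      summable_of_sum_range_le (c_nonneg (m+2)) hbound
    set S2 : ℝ := ∑' k, c (m+2) k with hS2def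
    have hS2 : HasSum (fun k => c (m+2) k) S2 := hsummable.hasSum
    have htend : Filter.Tendsto (fun n => ∑ k ∈ Finset.range (n+1), c (m+2) k)
        Filter.atTop (nhds S2) :=
      (Filter.tendsto_add_atTop_iff_nat 1).2 hS2.tendsto_sum_nat
    have htendU : Filter.Tendsto (fun n => ∑ k ∈ Finset.range (n+1), c (m+1) k)
        Filter.atTop (nhds S) :=
      (Filter.tendsto_add_atTop_iff_nat 1).2 ih.tendsto_sum_nat
    have hc0 : Filter.Tendsto (fun n => c (m+2) n) Filter.atTop (nhds 0) :=
      hsummable.tendsto_atTop_zero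
    set L : ℝ := ((m:ℝ)+1)*S - ((m:ℝ)+4)*S2 with hLdef
    have hprod : Filter.Tendsto (fun n : ℕ => ((m:ℝ)+2+(n:ℝ)) * c (m+2) n)
        Filter.atTop (nhds L) := by
      have := (htendU.const_mul ((m:ℝ)+1)).sub (htend.const_mul ((m:ℝ)+4))
      exact this.congr (fun n => by have := key m n; linarith)
    have hnc : Filter.Tendsto (fun n : ℕ => (n:ℝ) * c (m+2) n) Filter.atTop (nhds L) := by
      have := hprod.sub (hc0.const_mul ((m:ℝ)+2))
      simp only [mul_zero, sub_zero] at this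
      exact this.congr (fun n => by ring)
    have hL0 : 0 ≤ L := ge_of_tendsto' hnc (fun n => mul_nonneg (by positivity) (c_nonneg _ _))
    have hLe : L ≤ 0 := by
      by_contra hL
      push_neg at hL
      have hev : ∀ᶠ n : ℕ in Filter.atTop, L/2 < (n:ℝ) * c (m+2) n :=
        hnc.eventually (eventually_gt_nhds (by linarith))
      obtain ⟨N, hN⟩ := Filter.eventually_atTop.1 hev
      set M := N + 1 with hMdef
      have hcomp : ∀ n : ℕ, L/2/((n:ℝ)+(M:ℝ)) ≤ c (m+2) (n + M) := by
        intro n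
        have h := hN (n + M) (by omega)
        have hpos : (0:ℝ) < (n:ℝ)+(M:ℝ) := by positivity
        rw [div_le_iff₀ hpos]
        push_cast at h ⊢
        nlinarith
      have hsum1 : Summable (fun n : ℕ => c (m+2) (n + M)) :=
        (summable_nat_add_iff M).2 hsummable
      have hsum2 : Summable (fun n : ℕ => L/2/((n:ℝ)+(M:ℝ))) :=
        Summable.of_nonneg_of_le (fun n => by positivity) hcomp hsum1
      have hsum3 : Summable (fun n : ℕ => 1/((n:ℝ)+(M:ℝ))) := by
        have := hsum2.mul_left (2/L)
        refine this.congr (fun n => ?_)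
        field_simp
      have hsum4 : Summable (fun n : ℕ => 1/((n + M : ℕ):ℝ)) := by
        refine hsum3.congr (fun n => ?_)
        push_cast
        ring_nf
      have : Summable (fun n : ℕ => 1/(n:ℝ)) := (summable_nat_add_iff M).1 hsum4
      exact Real.not_summable_one_div_natCast this
    have hLzero : L = 0 := le_antisymm hLe hL0
    have hval : S2 = 4/(((m:ℝ)+2)*((m:ℝ)+3)*((m:ℝ)+4)) := by
      have hm1 : ((m:ℝ)+1) ≠ 0 := by positivity
      have hm2 : ((m:ℝ)+2) ≠ 0 := by positivity
      have hm3 : ((m:ℝ)+3) ≠ 0 := by positivity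
      have hm4 : ((m:ℝ)+4) ≠ 0 := by positivity
      have hS2eq : S2 = ((m:ℝ)+1)*S/((m:ℝ)+4) := by
        rw [eq_div_iff hm4]
        linarith [hLzero]
      rw [hS2eq, hSdef]
      field_simp
    have hfinal : HasSum (fun k => c (m+2) k) (4/(((m:ℝ)+2)*((m:ℝ)+3)*((m:ℝ)+4))) := by
      rw [← hval]; exact hS2
    have heq : (4:ℝ)/((((m:ℕ):ℝ)+1+1)*(((m:ℕ):ℝ)+1+2)*(((m:ℕ):ℝ)+1+3))
        = 4/(((m:ℝ)+2)*((m:ℝ)+3)*((m:ℝ)+4)) := by ring_nf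
    push_cast
    rw [heq]
    exact hfinal

set_option maxHeartbeats 1000000 in
/-- The double series `∑_{l=0}^∞ ∑_{k=0}^∞ c(l,k)` converges with sum `1`. -/
theorem total_sum_c :
    (∀ l : ℕ, Summable (fun k : ℕ => c l k)) ∧
      HasSum (fun l : ℕ => ∑' k : ℕ, c l k) 1 := by
  have hsummable : ∀ l : ℕ, Summable (fun k : ℕ => c l k) := by
    intro l
    cases l with
    | zero =>
      have : (fun k : ℕ => c 0 k) = fun _ => (0:ℝ) := funext c_z2
      rw [this]; exact summable_zero
    | succ l => exact (rowSum l).summable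
  refine ⟨hsummable, ?_⟩
  have hg0 : ∑' k : ℕ, c 0 k = 0 := by
    have : (fun k : ℕ => c 0 k) = fun _ => (0:ℝ) := funext c_z2
    rw [this, tsum_zero]
  have hgl : ∀ l : ℕ, ∑' k : ℕ, c (l+1) k = 4/(((l:ℝ)+1)*((l:ℝ)+2)*((l:ℝ)+3)) :=
    fun l => (rowSum l).tsum_eq
  have hpartial : ∀ n : ℕ, ∑ l ∈ Finset.range (n+1), (∑' k : ℕ, c l k)
      = 1 - 2/(((n:ℝ)+1)*((n:ℝ)+2)) := by
    intro n
    induction n with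
    | zero => simp [hg0]
    | succ n ih =>
      rw [Finset.sum_range_succ, ih, hgl n]
      have h1 : ((n:ℝ)+1) ≠ 0 := by positivity
      have h2 : ((n:ℝ)+2) ≠ 0 := by positivity
      have h3 : ((n:ℝ)+3) ≠ 0 := by positivity
      push_cast
      field_simp
      ring
  rw [hasSum_iff_tendsto_nat_of_nonneg (fun l => tsum_nonneg (c_nonneg l))]
  rw [← Filter.tendsto_add_atTop_iff_nat 1]
  simp only [hpartial]
  have hdiv : Filter.Tendsto (fun n : ℕ => 2/(((n:ℝ)+1)*((n:ℝ)+2))) Filter.atTop (nhds 0) :=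
    Filter.Tendsto.div_atTop tendsto_const_nhds
      ((Filter.tendsto_atTop_add_const_right _ 1 tendsto_natCast_atTop_atTop).atTop_mul_atTop₀
        (Filter.tendsto_atTop_add_const_right _ 2 tendsto_natCast_atTop_atTop))
  have h1 : Filter.Tendsto (fun n : ℕ => 1 - 2/(((n:ℝ)+1)*((n:ℝ)+2)))
      Filter.atTop (nhds (1-0)) :=
    (tendsto_const_nhds : Filter.Tendsto (fun _ : ℕ => (1:ℝ)) _ _).sub hdiv
  simpa using h1
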